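/- arXiv:1109.2891 — 5 statements merged into one kernel-verified Lean document; each statement's English description precedes it below -/
import Mathlib

section
/- Let m ≥ 1 and let θ be defined as follows: for α ∈ 𝔽₂^{2m} and 1 ≤ i ≤ 2m-1, θ(α,i) = wt_{i,2m}(α) + i/2 if i is even, and θ(α,i) = wt_{i,2m}(α) + (i-1)/2 + α(2m) if i is odd. Suppose α, β ∈ 𝔽₂^{2m} satisfy α ⊕ β = e ⊕ e_i ⊕ e_j for some 1 ≤ i < j ≤ 2m-1. Then θ(α,i) + θ(β,i) + θ(α,j) + θ(β,j) ≡ 1 (mod 2). -/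
open Finset

/-- The `l`-th coordinate (1-based, `1 ≤ l ≤ 2m`) of a vector in 𝔽₂^{2m}; `0` out of range. -/
def coordZ (m : ℕ) (α : Fin (2*m) → ZMod 2) (l : ℕ) : ZMod 2 :=
  if h : 1 ≤ l ∧ l ≤ 2*m then α ⟨l-1, by omega⟩ else 0

/-- Partial weight `wt_{s,t}(α) = Σ_{l=s}^{t} α(l)` as a natural number. -/
def wtI (m s t : ℕ) (α : Fin (2*m) → ZMod 2) : ℕ :=
  ∑ l ∈ Finset.Icc s t, (coordZ m α l).val

/-- The `i`-th standard basis vector (1-based index `i`). -/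
def eV (m i : ℕ) : Fin (2*m) → ZMod 2 :=
  fun l => if l.val + 1 = i then 1 else 0

/-- The all-ones vector. -/
def allOne (m : ℕ) : Fin (2*m) → ZMod 2 := fun _ => 1

/-- Hamming weight. -/
def hw (m : ℕ) (α : Fin (2*m) → ZMod 2) : ℕ :=
  (Finset.univ.filter (fun l => α l ≠ 0)).card

/-- The sign function θ(α, i). -/
def theta (m : ℕ) (α : Fin (2*m) → ZMod 2) (i : ℕ) : ℕ :=
  if i % 2 = 0 then wtI m i (2*m) α + i/2
  else wtI m i (2*m) α + (i-1)/2 + (coordZ m α (2*m)).val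

lemma coordZ_add (m : ℕ) (α β : Fin (2*m) → ZMod 2) (l : ℕ) :
    coordZ m (α + β) l = coordZ m α l + coordZ m β l := by
  unfold coordZ; split <;> simp

lemma coordZ_E (m i j l : ℕ) (hl : 1 ≤ l) (hl2 : l ≤ 2*m) :
    coordZ m (allOne m + eV m i + eV m j) l
      = 1 + (if l = i then (1:ZMod 2) else 0) + (if l = j then 1 else 0) := by
  unfold coordZ allOne eV
  rw [dif_pos ⟨hl, hl2⟩]
  have h1 : l - 1 + 1 = l := by omega
  simp [Pi.add_apply, h1]

lemma sum_coordE (m i j s : ℕ) (hs : 1 ≤ s) :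
    ∑ l ∈ Finset.Icc s (2*m), coordZ m (allOne m + eV m i + eV m j) l
      = ((2*m + 1 - s : ℕ) : ZMod 2)
        + (if s ≤ i ∧ i ≤ 2*m then 1 else 0)
        + (if s ≤ j ∧ j ≤ 2*m then 1 else 0) := by
  rw [Finset.sum_congr rfl fun l hl => coordZ_E m i j l
    (by simp only [Finset.mem_Icc] at hl; omega) (by simp only [Finset.mem_Icc] at hl; omega)]
  rw [Finset.sum_add_distrib, Finset.sum_add_distrib, Finset.sum_ite_eq', Finset.sum_ite_eq']
  simp [Nat.card_Icc, Finset.mem_Icc]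

lemma wt_pair (m s : ℕ) (α β : Fin (2*m) → ZMod 2) :
    ((wtI m s (2*m) α + wtI m s (2*m) β : ℕ) : ZMod 2)
      = ∑ l ∈ Finset.Icc s (2*m), coordZ m (α + β) l := by
  unfold wtI
  push_cast
  rw [← Finset.sum_add_distrib]
  refine Finset.sum_congr rfl fun l _ => ?_
  rw [coordZ_add]
  simp [ZMod.natCast_val, ZMod.cast_id]

lemma theta_pair (m s : ℕ) (α β : Fin (2*m) → ZMod 2) :
    ((theta m α s + theta m β s : ℕ) : ZMod 2)
      = ((wtI m s (2*m) α + wtI m s (2*m) β : ℕ) : ZMod 2)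
        + (if s % 2 = 0 then 0 else coordZ m α (2*m) + coordZ m β (2*m)) := by
  unfold theta
  have h2 : (2 : ZMod 2) = 0 := by decide
  split
  · push_cast
    linear_combination ((s/2 : ℕ) : ZMod 2) * h2
  · push_cast [ZMod.natCast_val, ZMod.cast_id]
    linear_combination (((s-1)/2 : ℕ) : ZMod 2) * h2

lemma cast_sub_parity (m s : ℕ) (hs : s ≤ 2*m + 1) :
    ((2*m + 1 - s : ℕ) : ZMod 2) = 1 + (s : ℕ) := by
  have h : (2*m + 1 - s) + s = 2*m + 1 := by omega
  have h' := congrArg (Nat.cast : ℕ → ZMod 2) h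
  push_cast at h'
  have h2 : (2 : ZMod 2) = 0 := by decide
  linear_combination h' + ((m : ZMod 2) - (s : ZMod 2)) * h2

lemma cast_parity (s : ℕ) : ((s : ℕ) : ZMod 2) = if s % 2 = 0 then 0 else 1 := by
  have := (ZMod.natCast_mod s 2)
  rcases Nat.mod_two_eq_zero_or_one s with h | h <;> rw [h] at this <;> simp [h, ← this]

theorem theta_alamouti_sign (m : ℕ) (hm : 1 ≤ m)
    (α β : Fin (2*m) → ZMod 2) (i j : ℕ)
    (hi : 1 ≤ i) (hij : i < j) (hj : j ≤ 2*m - 1)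
    (hab : α + β = allOne m + eV m i + eV m j) :
    (theta m α i + theta m β i + theta m α j + theta m β j) % 2 = 1 := by
  have hc : coordZ m α (2*m) + coordZ m β (2*m) = 1 := by
    rw [← coordZ_add, hab, coordZ_E m i j (2*m) (by omega) le_rfl,
      if_neg (by omega), if_neg (by omega)]
    ring
  have key : ((theta m α i + theta m β i + theta m α j + theta m β j : ℕ) : ZMod 2) = 1 := by
    have e1 : ((theta m α i + theta m β i + theta m α j + theta m β j : ℕ) : ZMod 2)
        = ((theta m α i + theta m β i : ℕ) : ZMod 2) + ((theta m α j + theta m β j : ℕ) : ZMod 2) := by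
      push_cast; ring
    have hii : i ≤ i ∧ i ≤ 2*m := ⟨le_rfl, by omega⟩
    have hij' : i ≤ j ∧ j ≤ 2*m := ⟨le_of_lt hij, by omega⟩
    have hji : ¬ (j ≤ i ∧ i ≤ 2*m) := by omega
    have hjj : j ≤ j ∧ j ≤ 2*m := ⟨le_rfl, by omega⟩
    rw [e1, theta_pair, theta_pair, wt_pair, wt_pair, hab,
      sum_coordE m i j i hi, sum_coordE m i j j (by omega),
      if_pos hii, if_pos hij', if_neg hji, if_pos hjj,
      cast_sub_parity m i (by omega), cast_sub_parity m j (by omega),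
      hc, cast_parity i, cast_parity j]
    rcases Nat.mod_two_eq_zero_or_one i with h1 | h1 <;>
      rcases Nat.mod_two_eq_zero_or_one j with h2 | h2 <;>
      simp only [h1, h2, if_pos, if_neg, reduceIte] <;> decide
  rcases Nat.mod_two_eq_zero_or_one (theta m α i + theta m β i + theta m α j + theta m β j) with h | h
  · exfalso
    have := ZMod.natCast_mod (theta m α i + theta m β i + theta m α j + theta m β j) 2
    rw [h, key] at this
    simp at this
  · exact h
end

section
/- Let m ≥ 1 and define θ(α,i) as follows: θ(α,i) = wt_{i,2m}(α) + i/2 for i even, θ(α,i) = wt_{i,2m}(α) + (i-1)/2 + α(2m) for i odd. Fix 1 ≤ i ≤ 2m-1 and α ∈ 𝔽₂^{2m}, and let β = α ⊕ e_i ⊕ e_{2m} ⊕ e. Then θ(α,i) + θ(β,i) ≡ 1 (mod 2) if i is even, and θ(α,i) + θ(β,i) ≡ 0 (mod 2) if i is odd. -/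
open Finset

theorem theta_step_parity (m : ℕ) (hm : 1 ≤ m)
    (α : Fin (2*m) → ZMod 2) (i : ℕ) (hi1 : 1 ≤ i) (hi2 : i ≤ 2*m - 1) :
    let β := α + eV m i + eV m (2*m) + allOne m
    (i % 2 = 0 → (theta m α i + theta m β i) % 2 = 1) ∧
    (i % 2 = 1 → (theta m α i + theta m β i) % 2 = 0) := by
  intro β
  have hβ : β = α + eV m i + eV m (2*m) + allOne m := rfl
  have him : i < 2*m := by omega
  have hcoord : ∀ l ∈ Finset.Icc i (2*m),
      (coordZ m α l : ZMod 2) + coordZ m β l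
        = (if l = i then 1 else 0) + (if l = 2*m then 1 else 0) + 1 := by
    intro l hl
    simp only [Finset.mem_Icc] at hl
    have h1 : 1 ≤ l := le_trans hi1 hl.1
    have hand : 1 ≤ l ∧ l ≤ 2*m := ⟨h1, hl.2⟩
    simp only [coordZ, dif_pos hand, hβ, Pi.add_apply, eV, allOne]
    have hl1 : l - 1 + 1 = l := by omega
    rw [hl1]
    generalize α ⟨l-1, _⟩ = x
    generalize (if l = i then (1:ZMod 2) else 0) = a
    generalize (if l = 2*m then (1:ZMod 2) else 0) = b
    revert x a b; decide
  have hβc : coordZ m β (2*m) = coordZ m α (2*m) := by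
    have hand : 1 ≤ 2*m ∧ 2*m ≤ 2*m := ⟨by omega, le_refl _⟩
    simp only [coordZ, dif_pos hand, hβ, Pi.add_apply, eV, allOne]
    have h1 : 2*m - 1 + 1 = 2*m := by omega
    rw [h1]
    rw [if_neg (by omega), if_pos rfl]
    generalize α ⟨2*m-1, _⟩ = x
    revert x; decide
  have hsum : ((wtI m i (2*m) α : ℕ) : ZMod 2) + ((wtI m i (2*m) β : ℕ) : ZMod 2)
      = ((i+1 : ℕ) : ZMod 2) := by
    simp only [wtI, Nat.cast_sum, ZMod.natCast_val, ZMod.cast_id]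
    rw [← Finset.sum_add_distrib, Finset.sum_congr rfl hcoord,
      Finset.sum_add_distrib, Finset.sum_add_distrib]
    rw [Finset.sum_ite_eq' (Finset.Icc i (2*m)) i (fun _ => (1:ZMod 2)),
      Finset.sum_ite_eq' (Finset.Icc i (2*m)) (2*m) (fun _ => (1:ZMod 2))]
    rw [if_pos (by simp [Finset.mem_Icc]; omega), if_pos (by simp [Finset.mem_Icc]; omega)]
    rw [Finset.sum_const, Nat.card_Icc, nsmul_eq_mul, mul_one]
    have hc : ((2*m+1-i : ℕ) : ZMod 2) = ((i+1 : ℕ) : ZMod 2) := by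
      rw [ZMod.natCast_eq_natCast_iff]
      show (2*m+1-i) % 2 = (i+1) % 2
      omega
    rw [hc]
    generalize ((i+1:ℕ) : ZMod 2) = x
    revert x; decide
  have hth : ((theta m α i + theta m β i : ℕ) : ZMod 2) = ((i+1:ℕ) : ZMod 2) := by
    have h2 : ∀ c : ZMod 2, c + c = 0 := by decide
    push_cast at hsum
    by_cases hp : i % 2 = 0
    · simp only [theta, if_pos hp]
      push_cast
      linear_combination hsum + h2 ((i/2 : ℕ) : ZMod 2)
    · simp only [theta, if_neg hp, hβc]
      push_cast
      linear_combination hsum + h2 (((i-1)/2 : ℕ) : ZMod 2)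
        + h2 (((coordZ m α (2*m)).val : ℕ) : ZMod 2)
  have hmod := (ZMod.natCast_eq_natCast_iff _ _ _).mp hth
  simp only [Nat.ModEq] at hmod
  constructor <;> intro hp <;> omega
end

section
/- Let m be an odd positive integer. There is no function φ from {α ∈ 𝔽₂^{2m} : wt(α) = m+1, α(2m) = 1} to 𝔽₂ such that for every α in this set and every 1 ≤ i ≤ 2m-1 with α(i) = 1, φ(α ⊕ e_i ⊕ e_{2m} ⊕ e) = φ(α) when i is even, and φ(α ⊕ e_i ⊕ e_{2m} ⊕ e) = φ(α) ⊕ 1 when i is odd. -/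
open Finset

def AV (m k : ℕ) : Fin (2*m) → ZMod 2 :=
  fun l => if (k ≤ l.val ∧ l.val < m + k) ∨ l.val = 2*m - 1 then 1 else 0
def BV (m k : ℕ) : Fin (2*m) → ZMod 2 :=
  fun l => if l.val < k + 1 ∨ m + k ≤ l.val then 1 else 0

lemma hw_eq (m : ℕ) (α : Fin (2*m) → ZMod 2) (Q : ℕ → Prop) [DecidablePred Q]
    (h : ∀ l : Fin (2*m), α l ≠ 0 ↔ Q l.val) :
    hw m α = ((Finset.range (2*m)).filter Q).card := by
  unfold hw
  rw [Finset.card_filter, Finset.card_filter,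
    ← Fin.sum_univ_eq_sum_range (fun l => if Q l then 1 else 0) (2*m)]
  exact Finset.sum_congr rfl (fun l _ => by simp [h l])

lemma hw_AV (m k : ℕ) (hm : 1 ≤ m) (hk : k ≤ m - 1) : hw m (AV m k) = m + 1 := by
  rw [hw_eq m (AV m k) (fun l => (k ≤ l ∧ l < m + k) ∨ l = 2*m - 1)
    (fun l => by simp [AV]; omega)]
  have : (Finset.range (2*m)).filter (fun l => (k ≤ l ∧ l < m + k) ∨ l = 2*m - 1)
      = Finset.Ico k (m+k) ∪ {2*m-1} := by
    ext l; simp [Finset.mem_Ico]; omega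
  rw [this, Finset.card_union_of_disjoint (by simp [Finset.disjoint_singleton_right]; omega)]
  simp only [Nat.card_Ico, Finset.card_singleton]; omega

lemma hw_BV (m k : ℕ) (hm : 1 ≤ m) (hk : k ≤ m - 1) : hw m (BV m k) = m + 1 := by
  rw [hw_eq m (BV m k) (fun l => l < k + 1 ∨ m + k ≤ l)
    (fun l => by simp [BV]; omega)]
  have : (Finset.range (2*m)).filter (fun l => l < k + 1 ∨ m + k ≤ l)
      = Finset.range (k+1) ∪ Finset.Ico (m+k) (2*m) := by
    ext l; simp [Finset.mem_Ico]; omega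
  rw [this, Finset.card_union_of_disjoint (by simp [Finset.disjoint_left]; omega)]
  simp only [Nat.card_Ico, Finset.card_range]; omega

lemma step_AB (m k : ℕ) (hm : 1 ≤ m) (hk : k ≤ m - 1) :
    AV m k + eV m (k+1) + eV m (2*m) + allOne m = BV m k := by
  funext l
  have hl := l.isLt
  simp only [Pi.add_apply, AV, BV, eV, allOne]
  split_ifs <;> first | decide | (exfalso; omega)

lemma step_BA (m k : ℕ) (hm : 1 ≤ m) (hk : k + 2 ≤ m) :
    BV m k + eV m (m+k+1) + eV m (2*m) + allOne m = AV m (k+1) := by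
  funext l
  have hl := l.isLt
  simp only [Pi.add_apply, AV, BV, eV, allOne]
  split_ifs <;> first | decide | (exfalso; omega)

lemma step_last (m : ℕ) (hm : 1 ≤ m) :
    AV m (m-1) + eV m m + eV m (2*m) + allOne m = AV m 0 := by
  funext l
  have hl := l.isLt
  simp only [Pi.add_apply, AV, eV, allOne]
  split_ifs <;> first | decide | (exfalso; omega)

lemma coord_AV_top (m k : ℕ) (hm : 1 ≤ m) : coordZ m (AV m k) (2*m) = 1 := by
  rw [coordZ, dif_pos (by omega)]
  simp only [AV]; rw [if_pos (by simp)]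

lemma coord_BV_top (m k : ℕ) (hm : 1 ≤ m) (hk : k ≤ m - 1) : coordZ m (BV m k) (2*m) = 1 := by
  rw [coordZ, dif_pos (by omega)]
  simp only [BV]; rw [if_pos (by omega)]

lemma coord_AV (m k : ℕ) (hm : 1 ≤ m) (hk : k ≤ m - 1) : coordZ m (AV m k) (k+1) = 1 := by
  rw [coordZ, dif_pos (by omega)]
  simp only [AV]; rw [if_pos (by omega)]

lemma coord_BV (m k : ℕ) (hm : 1 ≤ m) (hk : k + 2 ≤ m) : coordZ m (BV m k) (m+k+1) = 1 := by
  rw [coordZ, dif_pos (by omega)]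
  simp only [BV]; rw [if_pos (by omega)]

lemma coord_AV_last (m : ℕ) (hm : 1 ≤ m) : coordZ m (AV m (m-1)) m = 1 := by
  rw [coordZ, dif_pos (by omega)]
  simp only [AV]; rw [if_pos (by omega)]

theorem no_sign_function (m : ℕ) (hm : 1 ≤ m) (hodd : Odd m) :
    ¬ ∃ φ : (Fin (2*m) → ZMod 2) → ZMod 2,
      ∀ α : Fin (2*m) → ZMod 2, hw m α = m + 1 → coordZ m α (2*m) = 1 →
        ∀ i : ℕ, 1 ≤ i → i ≤ 2*m - 1 → coordZ m α i = 1 →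
          (i % 2 = 0 → φ (α + eV m i + eV m (2*m) + allOne m) = φ α) ∧
          (i % 2 = 1 → φ (α + eV m i + eV m (2*m) + allOne m) = φ α + 1) := by
  rintro ⟨φ, hφ⟩
  have hm2 : ((m : ℕ) : ZMod 2) = 1 := by
    rw [← ZMod.natCast_mod, Nat.odd_iff.mp hodd, Nat.cast_one]
  have h2z : (2 : ZMod 2) = 0 := by decide
  have step : ∀ α : Fin (2*m) → ZMod 2, hw m α = m + 1 → coordZ m α (2*m) = 1 →
      ∀ i : ℕ, 1 ≤ i → i ≤ 2*m - 1 → coordZ m α i = 1 →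
      φ (α + eV m i + eV m (2*m) + allOne m) = φ α + (i : ZMod 2) := by
    intro α h1 h2 i hi1 hi2 hci
    obtain ⟨he, ho⟩ := hφ α h1 h2 i hi1 hi2 hci
    rcases Nat.mod_two_eq_zero_or_one i with h | h
    · rw [he h, ← ZMod.natCast_mod i 2, h, Nat.cast_zero, add_zero]
    · rw [ho h, ← ZMod.natCast_mod i 2, h, Nat.cast_one]
  have key : ∀ k, k ≤ m - 1 → φ (AV m k) = φ (AV m 0) + (k : ZMod 2) := by
    intro k
    induction k with
    | zero => intro _; simp
    | succ k ih =>
      intro hk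
      have hk2 : k + 2 ≤ m := by omega
      have h1 : φ (BV m k) = φ (AV m k) + ((k+1 : ℕ) : ZMod 2) := by
        rw [← step_AB m k hm (by omega)]
        exact step _ (hw_AV m k hm (by omega)) (coord_AV_top m k hm) (k+1) (by omega)
          (by omega) (coord_AV m k hm (by omega))
      have h2 : φ (AV m (k+1)) = φ (BV m k) + ((m+k+1 : ℕ) : ZMod 2) := by
        rw [← step_BA m k hm hk2]
        exact step _ (hw_BV m k hm (by omega)) (coord_BV_top m k hm (by omega)) (m+k+1)
          (by omega) (by omega) (coord_BV m k hm hk2)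
      rw [h2, h1, ih (by omega)]
      push_cast
      linear_combination hm2 + ((k : ZMod 2) + 1) * h2z
  have hlast : φ (AV m 0) = φ (AV m (m-1)) + ((m : ℕ) : ZMod 2) := by
    rw [← step_last m hm]
    exact step _ (hw_AV m (m-1) hm (by omega)) (coord_AV_top m (m-1) hm) m (by omega)
      (by omega) (coord_AV_last m hm)
  rw [key (m-1) le_rfl, hm2, Nat.cast_sub hm, hm2, Nat.cast_one] at hlast
  have : (0 : ZMod 2) = 1 := by linear_combination hlast
  exact absurd this (by decide)
end

section
/- Let m be an odd positive integer and suppose φ : {α ∈ 𝔽₂^{2m} : wt(α) = m+1, α(2m) = 1} → 𝔽₂ satisfies φ(α ⊕ e_i ⊕ e_{2m} ⊕ e) = φ(α) ⊕ (i mod 2) for every α in the domain and every 1 ≤ i ≤ 2m-1 with α(i) = 1. Then for any α in the domain, applying the relation successively along any sequence of indices i₁, …, i_{2m-1} that is a permutation of {1, …, 2m-1} (whenever each step is legal) returns to α with accumulated sign m mod 2; in particular, if such a full sequence of legal steps exists starting from α, then φ(α) = φ(α) ⊕ 1, a contradiction, since ⊕_{l=1}^{2m-1}(e_l ⊕ e_{2m}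 ⊕ e) = 0 and Σ_{l=1}^{2m-1} (l mod 2) = m is odd. -/
open Finset

/-- One step of the chain: α ↦ α ⊕ eᵢ ⊕ e_{2m} ⊕ e. -/
def stepV (m i : ℕ) (α : Fin (2*m) → ZMod 2) : Fin (2*m) → ZMod 2 :=
  α + eV m i + eV m (2*m) + allOne m

/-- Legality of a chain of steps from α along a list of indices. -/
def legalChain (m : ℕ) : List ℕ → (Fin (2*m) → ZMod 2) → Prop
  | [], _ => True
  | i :: L, α => coordZ m α i = 1 ∧ legalChain m L (stepV m i α)

-- AUX START
lemma zmod2_cases (a : ZMod 2) : a = 0 ∨ a = 1 := by revert a; decide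

lemma hw_eq_sum (m : ℕ) (α : Fin (2*m) → ZMod 2) : hw m α = ∑ l, (α l).val := by
  unfold hw
  rw [Finset.card_filter]
  refine Finset.sum_congr rfl fun l _ => ?_
  rcases zmod2_cases (α l) with h | h <;> simp [h, ZMod.val_one]

lemma stepV_apply (m i : ℕ) (α : Fin (2*m) → ZMod 2) (l : Fin (2*m)) :
    stepV m i α l = α l + (if l.val + 1 = i then 1 else 0)
      + (if l.val + 1 = 2*m then 1 else 0) + 1 := by
  simp [stepV, eV, allOne]

lemma coordZ_eq (m : ℕ) (α : Fin (2*m) → ZMod 2) (i : ℕ) (h1 : 1 ≤ i) (h2 : i ≤ 2*m) :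
    coordZ m α i = α ⟨i-1, by omega⟩ := by
  rw [coordZ, dif_pos ⟨h1, h2⟩]

lemma step_inv (m i : ℕ) (hm : 1 ≤ m) (hi1 : 1 ≤ i) (hi2 : i ≤ 2*m-1)
    (α : Fin (2*m) → ZMod 2)
    (hwα : hw m α = m+1) (h2m : coordZ m α (2*m) = 1) (hαi : coordZ m α i = 1) :
    hw m (stepV m i α) = m+1 ∧ coordZ m (stepV m i α) (2*m) = 1 := by
  have hi0 : i - 1 < 2*m := by omega
  have hj0 : 2*m - 1 < 2*m := by omega
  have hij : (⟨i-1, hi0⟩ : Fin (2*m)) ≠ ⟨2*m-1, hj0⟩ := by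
    simp only [ne_eq, Fin.mk.injEq]; omega
  have hαi0 : α ⟨i-1, hi0⟩ = 1 := by rw [coordZ_eq m α i hi1 (by omega)] at hαi; exact hαi
  have hαj0 : α ⟨2*m-1, hj0⟩ = 1 := by
    rw [coordZ_eq m α (2*m) (by omega) (le_refl _)] at h2m; exact h2m
  have hcoord : coordZ m (stepV m i α) (2*m) = 1 := by
    rw [coordZ_eq m _ (2*m) (by omega) (le_refl _), stepV_apply]
    rw [if_neg (show ¬((⟨2*m-1, hj0⟩ : Fin (2*m)).val + 1 = i) by show ¬(2*m-1+1 = i); omega),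
      if_pos (show (⟨2*m-1, hj0⟩ : Fin (2*m)).val + 1 = 2*m by show 2*m-1+1 = 2*m; omega)]
    rw [show α ⟨2*m-1, by omega⟩ = 1 from hαj0]
    decide
  refine ⟨?_, hcoord⟩
  have key : ∀ l : Fin (2*m), ((stepV m i α l).val : ℕ) + (α l).val
      = 1 + (if l = ⟨i-1, hi0⟩ then 1 else 0) + (if l = ⟨2*m-1, hj0⟩ then 1 else 0) := by
    intro l
    rw [stepV_apply]
    by_cases h1 : l = ⟨i-1, hi0⟩
    · subst h1
      rw [if_pos (show (⟨i-1, hi0⟩ : Fin (2*m)).val + 1 = i by show i-1+1 = i; omega),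
        if_neg (show ¬((⟨i-1, hi0⟩ : Fin (2*m)).val + 1 = 2*m) by show ¬(i-1+1 = 2*m); omega),
        hαi0, if_pos rfl, if_neg hij]
      decide
    · by_cases h2 : l = ⟨2*m-1, hj0⟩
      · subst h2
        rw [if_neg (show ¬((⟨2*m-1, hj0⟩ : Fin (2*m)).val + 1 = i) by show ¬(2*m-1+1 = i); omega),
          if_pos (show (⟨2*m-1, hj0⟩ : Fin (2*m)).val + 1 = 2*m by show 2*m-1+1 = 2*m; omega),
          hαj0, if_neg h1, if_pos rfl]
        decide
      · have hl1 : l.val + 1 ≠ i := by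
          intro h; apply h1; exact Fin.ext (by simp only [Fin.val_mk]; omega)
        have hl2 : l.val + 1 ≠ 2*m := by
          intro h; apply h2; exact Fin.ext (by simp only [Fin.val_mk]; omega)
        rw [if_neg hl1, if_neg hl2, if_neg h1, if_neg h2]
        rcases zmod2_cases (α l) with h | h <;> rw [h] <;> decide
  have hsum : (∑ l, (stepV m i α l).val) + (∑ l, (α l).val) = 2*m + 2 := by
    rw [← Finset.sum_add_distrib]
    calc (∑ l : Fin (2*m), ((stepV m i α l).val + (α l).val))
        = ∑ l : Fin (2*m), (1 + (if l = (⟨i-1, hi0⟩ : Fin (2*m)) then 1 else 0)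
            + (if l = (⟨2*m-1, hj0⟩ : Fin (2*m)) then 1 else 0)) :=
          Finset.sum_congr rfl fun l _ => key l
      _ = 2*m + 2 := by
          rw [Finset.sum_add_distrib, Finset.sum_add_distrib, Finset.sum_const,
            Finset.sum_ite_eq' Finset.univ (⟨i-1, hi0⟩ : Fin (2*m)) (fun _ => 1),
            Finset.sum_ite_eq' Finset.univ (⟨2*m-1, hj0⟩ : Fin (2*m)) (fun _ => 1)]
          simp
  rw [hw_eq_sum] at hwα ⊢
  omega

def endOf (m : ℕ) : List ℕ → (Fin (2*m) → ZMod 2) → (Fin (2*m) → ZMod 2)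
  | [], α => α
  | i :: L, α => endOf m L (stepV m i α)

lemma endOf_eq (m : ℕ) : ∀ (L : List ℕ) (α : Fin (2*m) → ZMod 2),
    endOf m L α = α + (L.map (eV m)).sum + L.length • (eV m (2*m) + allOne m) := by
  intro L
  induction L with
  | nil => intro α; simp [endOf]
  | cons i L ih =>
    intro α
    rw [endOf, ih (stepV m i α), List.map_cons, List.sum_cons, List.length_cons,
      succ_nsmul]
    unfold stepV
    abel

lemma list_gauss : ∀ n : ℕ, (List.range n).sum * 2 + n = n * n := by
  intro n
  induction n with
  | zero => simp
  | succ n ih =>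
    rw [List.range_succ, List.sum_append]
    simp only [List.sum_cons, List.sum_nil]
    calc ((List.range n).sum + (n + 0)) * 2 + (n+1)
        = ((List.range n).sum * 2 + n) + (n + n + 1) := by ring
      _ = n * n + (n + n + 1) := by rw [ih]
      _ = (n+1) * (n+1) := by ring

lemma eV_sum_range' (m : ℕ) (l : Fin (2*m)) : ∀ (n s : ℕ),
    (((List.range' s n).map (eV m)).sum) l
      = if s ≤ l.val + 1 ∧ l.val + 1 < s + n then 1 else 0 := by
  intro n
  induction n with
  | zero => intro s; rw [if_neg (by omega)]; simp
  | succ n ih =>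
    intro s
    rw [List.range'_succ, List.map_cons, List.sum_cons]
    have : (eV m s + ((List.range' (s+1) n).map (eV m)).sum) l
        = eV m s l + (((List.range' (s+1) n).map (eV m)).sum) l := rfl
    rw [this, ih (s+1)]
    simp only [eV]
    by_cases h : l.val + 1 = s
    · rw [if_pos h, if_neg (by omega), if_pos (by omega)]
      norm_num
    · rw [if_neg h]
      by_cases h1 : s + 1 ≤ l.val + 1 ∧ l.val + 1 < s + 1 + n
      · rw [if_pos h1, if_pos (by omega)]; norm_num
      · rw [if_neg h1, if_neg (by omega)]; norm_num

lemma chain_phi (m : ℕ) (hm : 1 ≤ m)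
    (φ : (Fin (2*m) → ZMod 2) → ZMod 2)
    (hφ : ∀ α : Fin (2*m) → ZMod 2, hw m α = m + 1 → coordZ m α (2*m) = 1 →
      ∀ i : ℕ, 1 ≤ i → i ≤ 2*m - 1 → coordZ m α i = 1 →
        φ (stepV m i α) = φ α + (i : ZMod 2)) :
    ∀ (L : List ℕ) (α : Fin (2*m) → ZMod 2),
      (∀ i ∈ L, 1 ≤ i ∧ i ≤ 2*m-1) → hw m α = m+1 → coordZ m α (2*m) = 1 →
      legalChain m L α → φ (endOf m L α) = φ α + ((L.sum : ℕ) : ZMod 2) := by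
  intro L
  induction L with
  | nil => intro α _ _ _ _; simp [endOf]
  | cons i L ih =>
    intro α hmem hwα h2m hleg
    simp only [legalChain] at hleg
    obtain ⟨hαi, htail⟩ := hleg
    obtain ⟨hi1, hi2⟩ := hmem i List.mem_cons_self
    obtain ⟨hinv1, hinv2⟩ := step_inv m i hm hi1 hi2 α hwα h2m hαi
    rw [endOf, ih (stepV m i α) (fun j hj => hmem j (List.mem_cons_of_mem i hj))
      hinv1 hinv2 htail, hφ α hwα h2m i hi1 hi2 hαi, List.sum_cons]
    push_cast
    ring

theorem full_cycle_contradiction (m : ℕ) (hm : 1 ≤ m) (hodd : Odd m)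
    (φ : (Fin (2*m) → ZMod 2) → ZMod 2)
    (hφ : ∀ α : Fin (2*m) → ZMod 2, hw m α = m + 1 → coordZ m α (2*m) = 1 →
      ∀ i : ℕ, 1 ≤ i → i ≤ 2*m - 1 → coordZ m α i = 1 →
        φ (stepV m i α) = φ α + (i : ZMod 2))
    (α : Fin (2*m) → ZMod 2) (hwα : hw m α = m + 1) (hα2m : coordZ m α (2*m) = 1)
    (L : List ℕ) (hperm : L.Perm (List.range' 1 (2*m - 1)))
    (hlegal : legalChain m L α) :
    False := by
  have hmem : ∀ i ∈ L, 1 ≤ i ∧ i ≤ 2*m-1 := by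
    intro i hi
    have h := List.mem_range'_1.mp (hperm.mem_iff.mp hi)
    exact ⟨h.1, by omega⟩
  have hφend := chain_phi m hm φ hφ L α hmem hwα hα2m hlegal
  have hlen : L.length = 2*m-1 := by rw [hperm.length_eq, List.length_range']
  have hmap : (L.map (eV m)).sum = ((List.range' 1 (2*m-1)).map (eV m)).sum :=
    (hperm.map _).sum_eq
  have h11 : (1 : ZMod 2) + 1 = 0 := by decide
  have hend : endOf m L α = α := by
    rw [endOf_eq, hlen, hmap]
    funext l
    rw [Pi.add_apply, Pi.add_apply, Pi.smul_apply, eV_sum_range' m l (2*m-1) 1, Pi.add_apply]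
    have hcast : ((2*m-1 : ℕ) : ZMod 2) = 1 := by
      rw [← ZMod.natCast_mod, show (2*m-1) % 2 = 1 from by omega, Nat.cast_one]
    rw [nsmul_eq_mul, hcast]
    simp only [eV, allOne]
    by_cases h : l.val + 1 = 2*m
    · rw [if_neg (by omega), if_pos h]
      linear_combination h11
    · rw [if_pos (by omega), if_neg h]
      linear_combination h11
  rw [hend] at hφend
  have hrange : List.range (2*m) = 0 :: List.range' 1 (2*m-1) := by
    rw [List.range_eq_range', show 2*m = (2*m-1)+1 from by omega, List.range'_succ]
    simp
  have hr : L.sum = (List.range (2*m)).sum := by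
    rw [hperm.sum_eq, hrange, List.sum_cons, zero_add]
  have hgauss := list_gauss (2*m)
  obtain ⟨m', rfl⟩ : ∃ m', m = m' + 1 := ⟨m - 1, by omega⟩
  have hx : ((m'+1)*(2*(m'+1)-1))*2 + 2*(m'+1) = (2*(m'+1))*(2*(m'+1)) := by
    rw [show 2*(m'+1)-1 = 2*m'+1 from by omega]; ring
  have h2S : L.sum * 2 = ((m'+1)*(2*(m'+1)-1)) * 2 := by
    rw [hr]; linarith
  have hS : L.sum = (m'+1)*(2*(m'+1)-1) := Nat.eq_of_mul_eq_mul_right (by norm_num) h2S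
  have hoddS : L.sum % 2 = 1 := by
    rw [hS]
    exact Nat.odd_iff.mp (hodd.mul (Nat.odd_iff.mpr (by omega)))
  have hone : ((L.sum : ℕ) : ZMod 2) = 1 := by
    rw [← ZMod.natCast_mod, hoddS, Nat.cast_one]
  rw [hone, left_eq_add] at hφend
  exact one_ne_zero hφend
end

section
/- Let m ≥ 2 and suppose γ ∈ 𝔽₂^{2m} has the form γ(1) = ⋯ = γ(s) = 1, γ(s+1) = 0, γ(t-1) = 1, γ(t) = ⋯ = γ(2m) = 0 for some 0 ≤ s < t ≤ 2m (with wt(γ) = m). Then for indices i with 1 ≤ i ≤ s or t ≤ i ≤ 2m-1, and any j ≠ i with γ(i) ⊕ γ(j) = 1, the index γ ⊕ e_i ⊕ e_j is strictly greater than γ in the order defined by α < β ⟺ Σ_{l=1}^{2m} α(l) 2^l < Σ_{l=1}^{2m} β(l) 2^l; i.e., γ is the smallest index among {γ} ∪ {γ ⊕ e_i ⊕ e_j : γ(i) ⊕ γ(j) = 1} for such i. -/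
open Finset

/-- The total order value Σ_l α(l)·2^l. -/
def orderVal (m : ℕ) (α : Fin (2*m) → ZMod 2) : ℕ :=
  ∑ l : Fin (2*m), (α l).val * 2 ^ (l.val + 1)

lemma key_lemma (m i j : ℕ) (γ : Fin (2*m) → ZMod 2)
    (hi1 : 1 ≤ i) (hj : j ≤ 2*m) (hij : i < j)
    (hγi : coordZ m γ i = 1) (hγj : coordZ m γ j = 0) :
    orderVal m γ < orderVal m (γ + eV m i + eV m j) := by
  have hp : i - 1 < 2*m := by omega
  have hq : j - 1 < 2*m := by omega
  set p : Fin (2*m) := ⟨i-1, hp⟩ with hpdef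
  set q : Fin (2*m) := ⟨j-1, hq⟩ with hqdef
  have hgp : γ p = 1 := by
    rw [coordZ, dif_pos ⟨hi1, by omega⟩] at hγi; exact hγi
  have hgq : γ q = 0 := by
    rw [coordZ, dif_pos ⟨by omega, hj⟩] at hγj; exact hγj
  have hne : p ≠ q := by
    intro h
    have := congrArg Fin.val h
    simp only [hpdef, hqdef] at this
    omega
  set δ := γ + eV m i + eV m j with hδ
  have h1 : δ p = 0 := by
    simp only [hδ, Pi.add_apply, eV, hgp]
    rw [if_pos (show i - 1 + 1 = i by omega), if_neg (show ¬(i - 1 + 1 = j) by omega)]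
    decide
  have h2 : δ q = 1 := by
    simp only [hδ, Pi.add_apply, eV, hgq]
    rw [if_pos (show j - 1 + 1 = j by omega), if_neg (show ¬(j - 1 + 1 = i) by omega)]
    decide
  have h3 : ∀ l : Fin (2*m), l ≠ p → l ≠ q → δ l = γ l := by
    intro l hlp hlq
    have hlp' : l.val ≠ p.val := fun h => hlp (Fin.ext h)
    have hlq' : l.val ≠ q.val := fun h => hlq (Fin.ext h)
    simp only [hδ, Pi.add_apply, eV]
    have hlp'' : l.val ≠ i - 1 := hlp'
    have hlq'' : l.val ≠ j - 1 := hlq'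
    rw [if_neg (show ¬(l.val + 1 = i) by omega), if_neg (show ¬(l.val + 1 = j) by omega)]
    ring
  have hqmem : q ∈ Finset.univ.erase p := Finset.mem_erase.mpr ⟨hne.symm, Finset.mem_univ q⟩
  have split : ∀ f : Fin (2*m) → ℕ,
      ∑ l, f l = f p + (f q + ∑ l ∈ (Finset.univ.erase p).erase q, f l) := by
    intro f
    rw [Finset.add_sum_erase _ f hqmem, Finset.add_sum_erase _ f (Finset.mem_univ p)]
  have hSeq : ∑ l ∈ (Finset.univ.erase p).erase q, (δ l).val * 2 ^ (l.val + 1)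
      = ∑ l ∈ (Finset.univ.erase p).erase q, (γ l).val * 2 ^ (l.val + 1) := by
    apply Finset.sum_congr rfl
    intro l hl
    have hl1 := Finset.mem_erase.mp hl
    have hl2 := Finset.mem_erase.mp hl1.2
    rw [h3 l hl2.1 hl1.1]
  have hpow : 2 ^ (p.val + 1) < 2 ^ (q.val + 1) := by
    apply Nat.pow_lt_pow_right (by norm_num)
    show i - 1 + 1 < j - 1 + 1
    omega
  rw [orderVal, orderVal, split, split, hSeq, hgp, hgq, h1, h2]
  simp only [ZMod.val_one, ZMod.val_zero, one_mul, zero_mul]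
  simp only [hpdef, hqdef, Fin.val_mk] at hpow ⊢
  omega

theorem gamma_smallest (m : ℕ) (hm : 2 ≤ m)
    (γ : Fin (2*m) → ZMod 2) (s t : ℕ) (hst : s < t) (ht : t ≤ 2*m)
    (hpre : ∀ l, 1 ≤ l → l ≤ s → coordZ m γ l = 1)
    (hs1 : coordZ m γ (s+1) = 0)
    (ht1 : coordZ m γ (t-1) = 1)
    (hsuf : ∀ l, t ≤ l → l ≤ 2*m → coordZ m γ l = 0)
    (hwγ : hw m γ = m)
    (i : ℕ) (hi : (1 ≤ i ∧ i ≤ s) ∨ (t ≤ i ∧ i ≤ 2*m - 1))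
    (j : ℕ) (hj1 : 1 ≤ j) (hj2 : j ≤ 2*m - 1) (hij : j ≠ i)
    (hsum : coordZ m γ i + coordZ m γ j = 1) :
    orderVal m γ < orderVal m (γ + eV m i + eV m j) := by
  rcases hi with ⟨hi1, hi2⟩ | ⟨hi1, hi2⟩
  · -- γ(i) = 1, γ(j) = 0, and j > s ≥ i
    have hγi : coordZ m γ i = 1 := hpre i hi1 hi2
    have hγj : coordZ m γ j = 0 := by
      rw [hγi] at hsum
      simpa using hsum
    have hjs : s < j := by
      by_contra h
      push_neg at h
      rw [hpre j hj1 h] at hγj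
      exact one_ne_zero hγj
    exact key_lemma m i j γ hi1 (by omega) (by omega) hγi hγj
  · -- γ(i) = 0, γ(j) = 1, and j < t ≤ i
    have hγi : coordZ m γ i = 0 := hsuf i hi1 (by omega)
    have hγj : coordZ m γ j = 1 := by
      rw [hγi] at hsum
      simpa using hsum
    have hjt : j < t := by
      by_contra h
      push_neg at h
      rw [hsuf j h (by omega)] at hγj
      exact zero_ne_one hγj
    have hcomm : γ + eV m i + eV m j = γ + eV m j + eV m i := by
      rw [add_right_comm]
    rw [hcomm]
    exact key_lemma m j i γ hj1 (by omega) (by omega) hγj hγi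
end
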